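/- Let S = ⋃_{k≥1} {10^k·n + k − 1 : n ≥ 1} ⊆ ℕ. Then for every k ≥ 1 and every d ≥ 0, the interval {d+1, d+2, …, d+2·10^k} contains k consecutive integers all belonging to S; more precisely, there exists n ≥ 1 such that {n·10^k, n·10^k + 1, …, n·10^k + (k−1)} ⊆ {d+1, …, d+2·10^k} and n·10^k + j ∈ S for every 0 ≤ j ≤ k−1. -/

import Mathlib

/-- The set `S = ⋃_{k ≥ 1} {10^k · n + k − 1 : n ≥ 1}`. -/
def Sset : Set ℕ := {m : ℕ | ∃ k, 1 ≤ k ∧ ∃ n, 1 ≤ n ∧ m = 10 ^ k * n + k - 1}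

/-- For every `k ≥ 1` and every `d ≥ 0`, the interval
`{d+1, …, d + 2·10^k}` contains `k` consecutive integers all belonging to `S`:
there is `n ≥ 1` with `{n·10^k, …, n·10^k + (k−1)} ⊆ {d+1, …, d + 2·10^k}` and
`n·10^k + j ∈ S` for all `0 ≤ j ≤ k−1`. -/
theorem stmt15 : ∀ k : ℕ, 1 ≤ k → ∀ d : ℕ, ∃ n : ℕ, 1 ≤ n ∧
    d + 1 ≤ n * 10 ^ k ∧ n * 10 ^ k + (k - 1) ≤ d + 2 * 10 ^ k ∧
    ∀ j : ℕ, j ≤ k - 1 → n * 10 ^ k + j ∈ Sset := by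
  intro k hk d
  refine ⟨d / 10 ^ k + 1, le_add_self.trans (le_refl _) |>.trans (Nat.le_add_left _ _), ?_, ?_, ?_⟩
  · have := (Nat.div_lt_iff_lt_mul (show 0 < 10 ^ k by positivity)).mp
      (Nat.lt_succ_self (d / 10 ^ k))
    rw [Nat.succ_eq_add_one] at this
    omega
  · have h1 : (d / 10 ^ k + 1) * 10 ^ k ≤ d + 10 ^ k := by
      have := Nat.div_mul_le_self d (10 ^ k)
      nlinarith [Nat.div_mul_le_self d (10 ^ k)]
    have h2 : k - 1 ≤ 10 ^ k := by
      calc k - 1 ≤ k := Nat.sub_le _ _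
        _ ≤ 10 ^ k := Nat.le_of_lt (Nat.lt_pow_self (by norm_num : 1 < 10))
    omega
  · intro j hj
    refine ⟨j + 1, by omega, (d / 10 ^ k + 1) * 10 ^ (k - (j + 1)), ?_, ?_⟩
    · exact Nat.one_le_iff_ne_zero.mpr (by positivity)
    · have hjk : j + 1 ≤ k := by omega
      have : 10 ^ (j + 1) * ((d / 10 ^ k + 1) * 10 ^ (k - (j + 1)))
          = (d / 10 ^ k + 1) * 10 ^ k := by
        rw [← mul_assoc, mul_comm (10 ^ (j+1)), mul_assoc, ← pow_add]
        congr 2; omega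
      rw [this]; omega
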